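/- For a non-constant polynomial f(x) = a₀ + a₁x + ⋯ + aₙxⁿ with integer coefficients mapping ℕ⁺ to ℕ⁺, f is a continuous self-map of the Golomb space if and only if a₀ = 0. -/

import Mathlib

/-- The base of the Golomb topology: arithmetic progressions `{a + b*n : n ≥ 0}`
with coprime `a, b ≥ 1`, viewed inside the positive integers. -/
def golombBasis : Set (Set ℕ+) :=
  {S | ∃ a b : ℕ, 1 ≤ a ∧ 1 ≤ b ∧ Nat.Coprime a b ∧
    S = {x : ℕ+ | ∃ n : ℕ, (x : ℕ) = a + b * n}}

/-- The Golomb (relatively prime integer) topology on `ℕ+`. -/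
instance golombTopology : TopologicalSpace ℕ+ :=
  TopologicalSpace.generateFrom golombBasis

open TopologicalSpace Polynomial

lemma golomb_isBasis : IsTopologicalBasis golombBasis := by
  refine ⟨?_, ?_, rfl⟩
  · rintro t₁ ⟨a, b, ha, hb, hab, rfl⟩ t₂ ⟨c, d, hc, hd, hcd, rfl⟩ x ⟨⟨n₁, hn₁⟩, ⟨n₂, hn₂⟩⟩
    have hxb : Nat.Coprime (x : ℕ) b := by
      rw [hn₁]; exact (Nat.coprime_add_mul_left_left a b n₁).mpr hab
    have hxd : Nat.Coprime (x : ℕ) d := by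
      rw [hn₂]; exact (Nat.coprime_add_mul_left_left c d n₂).mpr hcd
    refine ⟨{y : ℕ+ | ∃ n : ℕ, (y : ℕ) = (x : ℕ) + b * d * n},
      ⟨(x : ℕ), b * d, x.pos, Nat.mul_pos hb hd, hxb.mul_right hxd, rfl⟩,
      ⟨0, by simp⟩, ?_⟩
    rintro y ⟨n, hn⟩
    constructor
    · exact ⟨n₁ + d * n, by rw [hn, hn₁]; ring⟩
    · exact ⟨n₂ + b * n, by rw [hn, hn₂]; ring⟩
  · apply Set.eq_univ_of_univ_subset
    intro x _
    exact Set.mem_sUnion.mpr ⟨_, ⟨(x : ℕ), 1, x.pos, le_refl 1, Nat.coprime_one_right _, rfl⟩,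
      ⟨0, by simp⟩⟩

theorem polynomial_continuous_iff_const_zero (f : Polynomial ℤ)
    (hdeg : 0 < f.natDegree) (g : ℕ+ → ℕ+)
    (hg : ∀ x : ℕ+, ((g x : ℕ) : ℤ) = f.eval ((x : ℕ) : ℤ)) :
    Continuous g ↔ f.coeff 0 = 0 := by
  have hbasis : IsTopologicalBasis golombBasis := golomb_isBasis
  constructor
  · -- continuous → coeff 0 = 0
    intro hcont
    by_contra h0
    set a₀ : ℤ := f.coeff 0 with ha₀
    set A : ℕ := a₀.natAbs with hA
    have hA1 : 1 ≤ A := Nat.one_le_iff_ne_zero.mpr (by simpa [hA] using h0)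
    -- a positive-integer point A^2*(k+1) as ℕ+
    have hXpos : ∀ k : ℕ, 0 < A ^ 2 * (k + 1) := fun k => by positivity
    -- the key values are at least 1
    have hval : ∀ k : ℕ, 1 ≤ f.eval (((A ^ 2 * (k + 1) : ℕ) : ℤ)) := by
      intro k
      have h1 : (1 : ℤ) ≤ ((g ⟨A ^ 2 * (k + 1), hXpos k⟩ : ℕ) : ℤ) := by
        exact_mod_cast (g ⟨A ^ 2 * (k + 1), hXpos k⟩).pos
      rw [hg ⟨A ^ 2 * (k + 1), hXpos k⟩] at h1
      exact h1
    -- some value exceeds |a₀|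
    have hbig : ∃ k : ℕ, ((A : ℤ)) < f.eval (((A ^ 2 * (k + 1) : ℕ) : ℤ)) := by
      by_contra hsmall
      push_neg at hsmall
      have hfin : (⋃ v ∈ Finset.Icc (1 : ℤ) (A : ℤ), {x : ℤ | (f - Polynomial.C v).IsRoot x}).Finite := by
        apply Set.Finite.biUnion (Finset.Icc (1 : ℤ) (A : ℤ)).finite_toSet
        intro v _
        apply Polynomial.finite_setOf_isRoot
        intro hzero
        have : f = Polynomial.C v := by
          have := sub_eq_zero.mp hzero
          exact this
        rw [this] at hdeg
        simp at hdeg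
      have hinf : (⋃ v ∈ Finset.Icc (1 : ℤ) (A : ℤ), {x : ℤ | (f - Polynomial.C v).IsRoot x}).Infinite := by
        apply Set.infinite_of_injective_forall_mem
          (f := fun k : ℕ => ((A ^ 2 * (k + 1) : ℕ) : ℤ))
        · intro k1 k2 h
          simp only [Nat.cast_inj] at h
          have := Nat.eq_of_mul_eq_mul_left (show 0 < A ^ 2 by positivity) h
          omega
        · intro k
          have hroot : (f - Polynomial.C (f.eval (((A ^ 2 * (k + 1) : ℕ) : ℤ)))).IsRoot
              (((A ^ 2 * (k + 1) : ℕ) : ℤ)) := by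
            simp [Polynomial.IsRoot]
          simp only [Set.mem_iUnion, Set.mem_setOf_eq, Finset.mem_coe, Finset.mem_Icc]
          exact ⟨_, ⟨hval k, hsmall k⟩, hroot⟩
      exact hinf hfin
    obtain ⟨k, hk⟩ := hbig
    set X : ℕ := A ^ 2 * (k + 1) with hX
    have hXz : (X : ℤ) = a₀ ^ 2 * (k + 1) := by
      push_cast [hX]
      rw [Int.natAbs_sq]
    -- X ∣ f(X) - a₀
    have hdvd0 : ((X : ℕ) : ℤ) ∣ f.eval ((X : ℕ) : ℤ) - a₀ := by
      have h := Polynomial.sub_dvd_eval_sub ((X : ℕ) : ℤ) 0 f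
      rw [ha₀, Polynomial.coeff_zero_eq_eval_zero]
      simpa using h
    obtain ⟨w, hw⟩ := hdvd0
    set u : ℤ := 1 + a₀ * (k + 1) * w with hu
    have hfu : f.eval ((X : ℕ) : ℤ) = a₀ * u := by
      rw [hu]
      linear_combination hw + w * hXz
    have hA' : ((A : ℤ)) = |a₀| := (Int.abs_eq_natAbs a₀).symm
    have hApos : (0 : ℤ) < (A : ℤ) := by exact_mod_cast hA1
    have hu2 : u.natAbs ≠ 1 := by
      intro h1
      have habs1 : |u| = 1 := by
        rw [Int.abs_eq_natAbs, h1]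
        rfl
      have h2 : |f.eval ((X : ℕ) : ℤ)| = |a₀| := by
        rw [hfu, abs_mul, habs1, mul_one]
      have hpos : 0 < f.eval ((X : ℕ) : ℤ) := lt_trans hApos hk
      rw [abs_of_pos hpos] at h2
      rw [← hA'] at h2
      omega
    obtain ⟨p, hp, hpu⟩ := Int.exists_prime_and_dvd hu2
    set q : ℕ := p.natAbs with hq
    have hqprime : q.Prime := Int.prime_iff_natAbs_prime.mp hp
    have hqu : (q : ℤ) ∣ u := Int.natAbs_dvd.mpr hpu
    have hqX : (q : ℤ) ∣ f.eval ((X : ℕ) : ℤ) := by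
      rw [hfu]; exact Dvd.dvd.mul_left hqu a₀
    have hqa₀ : ¬(q : ℤ) ∣ a₀ := by
      intro hd
      have h1 : (q : ℤ) ∣ 1 := by
        have h2 := dvd_sub hqu (hd.mul_right ((k + 1) * w))
        have h3 : u - a₀ * ((k + 1) * w) = 1 := by rw [hu]; ring
        rwa [h3] at h2
      have h4 := Int.le_of_dvd one_pos h1
      have h5 : 2 ≤ q := hqprime.two_le
      omega
    -- the point x₀ := q
    set x₀ : ℕ+ := ⟨q, hqprime.pos⟩ with hx₀def
    have hx₀n : ((x₀ : ℕ)) = q := rfl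
    have hsubq : (q : ℤ) ∣ f.eval ((q : ℕ) : ℤ) - a₀ := by
      have h := Polynomial.sub_dvd_eval_sub ((q : ℕ) : ℤ) 0 f
      rw [ha₀, Polynomial.coeff_zero_eq_eval_zero]
      simpa using h
    have hqfq : ¬(q : ℤ) ∣ f.eval ((q : ℕ) : ℤ) := by
      intro hd
      apply hqa₀
      have := dvd_sub hd hsubq
      simpa using this
    have hgq : ¬ q ∣ (g x₀ : ℕ) := by
      intro hd
      apply hqfq
      have h1 : (q : ℤ) ∣ ((g x₀ : ℕ) : ℤ) := Int.natCast_dvd_natCast.mpr hd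
      rw [hg x₀] at h1
      exact h1
    have hcop : Nat.Coprime ((g x₀ : ℕ)) q :=
      Nat.coprime_comm.mp (hqprime.coprime_iff_not_dvd.mpr hgq)
    have hS : {y : ℕ+ | ∃ n : ℕ, (y : ℕ) = (g x₀ : ℕ) + q * n} ∈ golombBasis :=
      ⟨(g x₀ : ℕ), q, (g x₀).pos, hqprime.pos, hcop, rfl⟩
    have hopen : IsOpen (g ⁻¹' {y : ℕ+ | ∃ n : ℕ, (y : ℕ) = (g x₀ : ℕ) + q * n}) :=
      hcont.isOpen_preimage _ (hbasis.isOpen hS)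
    rw [hbasis.isOpen_iff] at hopen
    obtain ⟨V, ⟨a', m, ha', hm', ham, rfl⟩, hx₀V, hVsub⟩ := hopen x₀ ⟨0, by simp⟩
    obtain ⟨n₀, hn₀⟩ := hx₀V
    have hqm : Nat.Coprime q m := by
      have h1 := (Nat.coprime_add_mul_left_left a' m n₀).mpr ham
      rwa [← hn₀, hx₀n] at h1
    haveI : Fact q.Prime := ⟨hqprime⟩
    have hmq : (m : ZMod q) ≠ 0 := by
      rw [Ne, ZMod.natCast_eq_zero_iff]
      exact hqprime.coprime_iff_not_dvd.mp hqm
    set uz : ZMod q := (((X : ℕ) : ZMod q) - ((a' : ℕ) : ZMod q)) * ((m : ℕ) : ZMod q)⁻¹ with huz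
    set n₁ : ℕ := uz.val with hn₁
    have hcongr : ((a' + m * n₁ : ℕ) : ZMod q) = ((X : ℕ) : ZMod q) := by
      push_cast
      rw [hn₁, ZMod.natCast_rightInverse uz, huz]
      field_simp
      ring
    have hmod : (a' + m * n₁) ≡ X [MOD q] := (ZMod.natCast_eq_natCast_iff _ _ _).mp hcongr
    have hdq : (q : ℤ) ∣ ((X : ℕ) : ℤ) - ((a' + m * n₁ : ℕ) : ℤ) := hmod.dvd
    have hdq2 : (q : ℤ) ∣ f.eval (((a' + m * n₁ : ℕ) : ℤ)) := by
      have h := Polynomial.sub_dvd_eval_sub ((X : ℕ) : ℤ) ((a' + m * n₁ : ℕ) : ℤ) f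
      have h2 := dvd_trans hdq h
      have h3 := dvd_sub hqX h2
      simpa using h3
    have hposx : 0 < a' + m * n₁ := by omega
    set xx : ℕ+ := ⟨a' + m * n₁, hposx⟩ with hxx
    have hxV : xx ∈ {x : ℕ+ | ∃ n : ℕ, (x : ℕ) = a' + m * n} := ⟨n₁, rfl⟩
    obtain ⟨n₂, hn₂⟩ := hVsub hxV
    apply hqfq
    have hdq2' : (q : ℤ) ∣ f.eval (((xx : ℕ) : ℤ)) := hdq2
    have hcast : f.eval (((xx : ℕ) : ℤ)) = f.eval ((q : ℕ) : ℤ) + (q : ℤ) * n₂ := by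
      have h1 := hg xx
      have h2 := hg x₀
      rw [hx₀n] at h2
      rw [← h1, ← h2]
      exact_mod_cast congrArg (fun t : ℕ => (t : ℤ)) hn₂
    rw [hcast] at hdq2'
    have := dvd_sub hdq2' (Dvd.intro n₂ rfl)
    simpa using this
  · -- coeff 0 = 0 → continuous
    intro h0
    have hdvdN : ∀ x : ℕ+, (x : ℕ) ∣ (g x : ℕ) := by
      intro x
      obtain ⟨r, hr⟩ := Polynomial.X_dvd_iff.mpr h0
      have : ((x : ℕ) : ℤ) ∣ ((g x : ℕ) : ℤ) := by
        rw [hg x, hr, Polynomial.eval_mul, Polynomial.eval_X]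
        exact Dvd.intro _ rfl
      exact_mod_cast this
    rw [continuous_generateFrom_iff]
    rintro S ⟨a, b, ha, hb, hab, rfl⟩
    rw [hbasis.isOpen_iff]
    rintro x₀ ⟨n₀, hn₀⟩
    set c : ℕ := 1 + (g x₀ : ℕ) * (x₀ : ℕ) with hc
    have hcg : (g x₀ : ℕ) < c := by
      have h1 : (g x₀ : ℕ) ≤ (g x₀ : ℕ) * (x₀ : ℕ) := Nat.le_mul_of_pos_right _ x₀.pos
      omega
    have hx₀c : Nat.Coprime (x₀ : ℕ) c := by
      unfold Nat.Coprime
      rw [hc, Nat.gcd_add_mul_right_right (x₀ : ℕ) 1 (g x₀ : ℕ)]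
      exact Nat.gcd_one_right _
    have hgb : Nat.Coprime (g x₀ : ℕ) b := by
      rw [hn₀]; exact (Nat.coprime_add_mul_left_left a b n₀).mpr hab
    have hx₀b : Nat.Coprime (x₀ : ℕ) b := Nat.Coprime.coprime_dvd_left (hdvdN x₀) hgb
    set m : ℕ := b * c with hm
    have hm1 : 1 ≤ m := Nat.mul_pos hb (by omega)
    have hgm : (g x₀ : ℕ) < m := lt_of_lt_of_le hcg (Nat.le_mul_of_pos_left c hb)
    have hx₀m : Nat.Coprime (x₀ : ℕ) m := hx₀b.mul_right hx₀c
    refine ⟨{x : ℕ+ | ∃ n : ℕ, (x : ℕ) = (x₀ : ℕ) + m * n},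
      ⟨(x₀ : ℕ), m, x₀.pos, hm1, hx₀m, rfl⟩, ⟨0, by simp⟩, ?_⟩
    rintro x ⟨n, hn⟩
    have hdvd2 : (m : ℤ) ∣ ((g x : ℕ) : ℤ) - ((g x₀ : ℕ) : ℤ) := by
      have h1 : ((x : ℕ) : ℤ) - ((x₀ : ℕ) : ℤ) = (m : ℤ) * n := by
        rw [hn]; push_cast; ring
      have h2 := Polynomial.sub_dvd_eval_sub ((x : ℕ) : ℤ) ((x₀ : ℕ) : ℤ) f
      rw [← hg, ← hg] at h2
      exact dvd_trans ⟨n, h1⟩ h2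
    obtain ⟨t, ht⟩ := hdvd2
    have hgx1 : (1 : ℤ) ≤ ((g x : ℕ) : ℤ) := by exact_mod_cast (g x).pos
    have htnn : 0 ≤ t := by
      by_contra hneg
      push_neg at hneg
      have hmz : ((g x₀ : ℕ) : ℤ) < (m : ℤ) := by exact_mod_cast hgm
      have h3 : (m : ℤ) * t ≤ (m : ℤ) * (-1) :=
        mul_le_mul_of_nonneg_left (by omega) (by positivity)
      omega
    refine ⟨n₀ + c * t.toNat, ?_⟩
    have hcast : ((g x : ℕ) : ℤ) = ((a + b * (n₀ + c * t.toNat) : ℕ) : ℤ) := by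
      push_cast [Int.toNat_of_nonneg htnn]
      have hn₀' : ((g x₀ : ℕ) : ℤ) = (a : ℤ) + b * n₀ := by exact_mod_cast hn₀
      rw [hm] at ht
      push_cast at ht
      linarith [ht, hn₀']
    exact_mod_cast hcast
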